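/- In the bivariate setting with 0 < |a| ≤ b and a = b (equal signals), the three SNRs satisfy: E(T_{MS}) = b√2·√(1+ρ) is strictly the largest among {E(T_{J2}) = b√(1−ρ)√(1+ρ), E(T_{M2}) = b(1+ρ), E(T_{MS})} for all ρ ∈ (−1, 1) with b > 0; moreover if ρ > 0 then E(T_{J2}) is the smallest, and if ρ < 0 then E(T_{M2}) is the smallest. -/
import Mathlib

/-- In the bivariate setting with equal signals `a = b > 0` and `ρ ∈ (−1,1)`:
`E(T_{MS}) = b√2·√(1+ρ)` is strictly larger than both `E(T_{J2}) = b√(1−ρ)√(1+ρ)` and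
`E(T_{M2}) = b(1+ρ)`; moreover if `ρ > 0` then `E(T_{J2})` is the smallest and if
`ρ < 0` then `E(T_{M2})` is the smallest. -/
theorem stmt_13 (b ρ : ℝ) (hb : 0 < b) (hρ : ρ ∈ Set.Ioo (-1 : ℝ) 1) :
    (b * Real.sqrt (1 - ρ) * Real.sqrt (1 + ρ) < b * Real.sqrt 2 * Real.sqrt (1 + ρ) ∧
      b * (1 + ρ) < b * Real.sqrt 2 * Real.sqrt (1 + ρ)) ∧
    (0 < ρ → b * Real.sqrt (1 - ρ) * Real.sqrt (1 + ρ) < b * (1 + ρ)) ∧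
    (ρ < 0 → b * (1 + ρ) < b * Real.sqrt (1 - ρ) * Real.sqrt (1 + ρ)) := by
  obtain ⟨h1, h2⟩ := hρ
  have hp : (0:ℝ) < 1 + ρ := by linarith
  have hsp : 0 < Real.sqrt (1 + ρ) := Real.sqrt_pos.mpr hp
  have key : b * (1 + ρ) = b * Real.sqrt (1 + ρ) * Real.sqrt (1 + ρ) := by
    rw [mul_assoc, Real.mul_self_sqrt hp.le]
  refine ⟨⟨?_, ?_⟩, ?_, ?_⟩
  · have : Real.sqrt (1 - ρ) < Real.sqrt 2 := Real.sqrt_lt_sqrt (by linarith) (by linarith)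
    exact mul_lt_mul_of_pos_right (mul_lt_mul_of_pos_left this hb) hsp
  · rw [key]
    have : Real.sqrt (1 + ρ) < Real.sqrt 2 := Real.sqrt_lt_sqrt hp.le (by linarith)
    exact mul_lt_mul_of_pos_right (mul_lt_mul_of_pos_left this hb) hsp
  · intro h
    rw [key]
    have : Real.sqrt (1 - ρ) < Real.sqrt (1 + ρ) := Real.sqrt_lt_sqrt (by linarith) (by linarith)
    exact mul_lt_mul_of_pos_right (mul_lt_mul_of_pos_left this hb) hsp
  · intro h
    rw [key]
    have : Real.sqrt (1 + ρ) < Real.sqrt (1 - ρ) := Real.sqrt_lt_sqrt hp.le (by linarith)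
    exact mul_lt_mul_of_pos_right (mul_lt_mul_of_pos_left this hb) hsp
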